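/- Let (W, S) be a Coxeter system, and let S^f = {X ⊂ S | W_X is finite}. Define a relation ⪯ on W × S^f by declaring (u, X) ⪯ (v, Y) if and only if (1) X ⊂ Y, (2) v^{-1}u ∈ W_Y, and (3) v^{-1}u is (∅, X)-minimal. Then ⪯ is a partial order relation on W × S^f (reflexive, antisymmetric, and transitive). -/

import Mathlib

/-!
Statement 7: Let (W, S) be a Coxeter system, and let S^f = {X ⊆ S | W_X is finite}.  The
relation ⪯ on W × S^f defined by: (u, X) ⪯ (v, Y) iff (1) X ⊆ Y, (2) v⁻¹u ∈ W_Y, and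
(3) v⁻¹u is (∅, X)-minimal, is a partial order on W × S^f.

We realize W × S^f as the subtype of pairs (u, X) ∈ W × Set B such that the parabolic subgroup
W_X is finite, and the (∅,X)-minimality of an element w as the condition that
lg(w) ≤ lg(w·u) for all u ∈ W_X.
-/

open List CoxeterSystem

namespace CoxSalvetti
variable {B W : Type*} [Group W] {M : CoxeterMatrix B} (cs : CoxeterSystem M W)
local prefix:100 "s" => cs.simple
local prefix:100 "π" => cs.wordProd
local prefix:100 "ris" => cs.rightInvSeq
local prefix:100 "ℓ" => cs.length

noncomputable local instance : DecidableEq W := Classical.decEq W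

/-- The function underlying the reflection-parity permutation. -/
noncomputable def sigmaFun (i : B) : W × ZMod 2 → W × ZMod 2 :=
  fun p => (s i * p.1 * s i, p.2 + if p.1 = s i then 1 else 0)

lemma sigmaFun_involutive (i : B) : Function.Involutive (sigmaFun cs i) := by
  rintro ⟨t, e⟩
  simp only [sigmaFun]
  refine Prod.ext ?_ ?_
  · simp [mul_assoc]
  · simp only []
    have : (s i * t * s i = s i) ↔ (t = s i) := by
      constructor
      · intro h
        have := congrArg (fun x => s i * x * s i) h
        simpa [mul_assoc] using this
      · rintro rfl; simp
    simp only [this]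
    have h2 : (1 : ZMod 2) + 1 = 0 := rfl
    rcases em (t = s i) with h | h <;> simp [h, add_assoc, h2]

/-- The permutation of `W × ZMod 2` attached to a simple reflection. -/
noncomputable def sigma (i : B) : Equiv.Perm (W × ZMod 2) :=
  (sigmaFun_involutive cs i).toPerm

@[simp] lemma sigma_apply (i : B) (p : W × ZMod 2) :
    sigma cs i p = (s i * p.1 * s i, p.2 + if p.1 = s i then 1 else 0) := rfl

lemma ris_cons (i : B) (ω : List B) :
    ris (i :: ω) = (π ω)⁻¹ * (s i) * (π ω) :: ris ω := rfl

/-- Key computation: the product of sigmas along a word. -/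
lemma prod_map_sigma (ω : List B) (t : W) (e : ZMod 2) :
    (ω.map (sigma cs)).prod (t, e) =
      (π ω * t * (π ω)⁻¹, e + ((ris ω).count t : ZMod 2)) := by
  induction ω generalizing e with
  | nil => simp
  | cons i ω ih =>
    rw [map_cons, prod_cons, Equiv.Perm.mul_apply, ih, sigma_apply]
    rw [ris_cons, count_cons]
    refine Prod.ext ?_ ?_
    · simp [wordProd_cons, mul_assoc]
    · simp only []
      have : (π ω * t * (π ω)⁻¹ = s i) ↔ (t = (π ω)⁻¹ * s i * π ω) := by
        constructor
        · intro h; rw [← h]; group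
        · rintro rfl; group
      rw [if_congr this rfl rfl]
      rcases em (t = (π ω)⁻¹ * s i * π ω) with h | h
      · simp [h, add_assoc]
      · have h' : ¬((π ω)⁻¹ * s i * π ω = t) := fun hh => h hh.symm
        simp [h, h', add_assoc]



noncomputable def gfun (i i' : B) (n : ℕ) : W :=
  ((s i * s i')⁻¹) ^ n * s i'

section aux
variable {G : Type*} [Group G] {a b : G}

lemma aux_semi (ha : a * a = 1) (hb : b * b = 1) : SemiconjBy b (a * b) (a * b)⁻¹ := by
  have ha' : a⁻¹ = a := inv_eq_of_mul_eq_one_right ha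
  have hb' : b⁻¹ = b := inv_eq_of_mul_eq_one_right hb
  show b * (a * b) = (a * b)⁻¹ * b
  rw [mul_inv_rev, ha', hb', mul_assoc]

lemma aux1 (ha : a * a = 1) (hb : b * b = 1) (n q : ℕ) (h : n = q + q) :
    ((a * b) ^ q)⁻¹ * b * (a * b) ^ q = ((a * b)⁻¹) ^ n * b := by
  have key := ((aux_semi ha hb).pow_right q).eq
  calc ((a * b) ^ q)⁻¹ * b * (a * b) ^ q
      = ((a * b)⁻¹) ^ q * (b * (a * b) ^ q) := by rw [inv_pow, mul_assoc]
    _ = ((a * b)⁻¹) ^ q * (((a * b)⁻¹) ^ q * b) := by rw [key]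
    _ = ((a * b)⁻¹) ^ n * b := by rw [← mul_assoc, ← pow_add, h]

lemma aux2 (ha : a * a = 1) (hb : b * b = 1) (n q : ℕ) (h : n = (q + q) + 1) :
    (b * (a * b) ^ q)⁻¹ * a * (b * (a * b) ^ q) = ((a * b)⁻¹) ^ n * b := by
  have ha' : a⁻¹ = a := inv_eq_of_mul_eq_one_right ha
  have hb' : b⁻¹ = b := inv_eq_of_mul_eq_one_right hb
  have key := ((aux_semi ha hb).pow_right q).eq
  have hmid : b⁻¹ * a * b = (a * b)⁻¹ * b := by
    rw [mul_inv_rev, ha', hb', mul_assoc]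
  calc (b * (a * b) ^ q)⁻¹ * a * (b * (a * b) ^ q)
      = ((a * b) ^ q)⁻¹ * (b⁻¹ * a * b) * (a * b) ^ q := by group
    _ = ((a * b)⁻¹) ^ q * ((a * b)⁻¹ * (b * (a * b) ^ q)) := by
        rw [hmid, inv_pow]; group
    _ = ((a * b)⁻¹) ^ q * ((a * b)⁻¹ * (((a * b)⁻¹) ^ q * b)) := by rw [key]
    _ = ((a * b)⁻¹) ^ n * b := by
        rw [← mul_assoc ((a*b)⁻¹), ← pow_succ', ← mul_assoc, ← pow_add, h,
          show q + q + 1 = q + (q + 1) from by omega]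

end aux

lemma ris_alternatingWord (i i' : B) (n : ℕ) :
    ris (alternatingWord i i' n) = ((List.range n).reverse).map (gfun cs i i') := by
  induction n with
  | zero => simp [alternatingWord]
  | succ n ih =>
    rw [alternatingWord_succ', show cs.rightInvSeq ((if Even n then i' else i) ::
        alternatingWord i i' n) = (π (alternatingWord i i' n))⁻¹ *
        (s (if Even n then i' else i)) * (π (alternatingWord i i' n)) ::
        ris (alternatingWord i i' n) from rfl, ih,
      List.range_succ, List.reverse_append]
    simp only [reverse_singleton, singleton_append, map_cons]
    congr 1
    rw [cs.prod_alternatingWord_eq_mul_pow]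
    rcases Nat.even_or_odd n with he | ho
    · obtain ⟨q, hq⟩ := he
      rw [if_pos ⟨q, hq⟩, if_pos ⟨q, hq⟩, one_mul]
      have hdiv : n / 2 = q := by omega
      rw [hdiv, gfun]
      exact aux1 (cs.simple_mul_simple_self i) (cs.simple_mul_simple_self i') n q hq
    · obtain ⟨q, hq⟩ := ho
      have hne : ¬ Even n := by rw [Nat.even_iff]; omega
      rw [if_neg hne, if_neg hne]
      have hdiv : n / 2 = q := by omega
      rw [hdiv, gfun]
      exact aux2 (cs.simple_mul_simple_self i) (cs.simple_mul_simple_self i') n q (by omega)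

lemma gfun_add_M (i i' : B) (n : ℕ) : gfun cs i i' (n + M i i') = gfun cs i i' n := by
  unfold gfun
  rw [pow_add]
  have : ((s i * s i')⁻¹) ^ (M i i') = 1 := by
    rw [inv_pow, cs.simple_mul_simple_pow, inv_one]
  rw [this, mul_one]


lemma alternatingWord_two_mul_succ (i i' : B) (m : ℕ) :
    alternatingWord i i' (2 * (m + 1)) = i :: i' :: alternatingWord i i' (2 * m) := by
  rw [show 2 * (m + 1) = (2 * m + 1) + 1 from by ring, alternatingWord_succ',
    alternatingWord_succ']
  rw [if_neg (by simp [Nat.even_iff, Nat.add_mod]), if_pos (by simp)]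


lemma prod_sigma_pow (i i' : B) (m : ℕ) :
    (sigma cs i * sigma cs i') ^ m = ((alternatingWord i i' (2 * m)).map (sigma cs)).prod := by
  induction m with
  | zero => simp [alternatingWord]
  | succ m ih =>
    rw [alternatingWord_two_mul_succ, map_cons, map_cons, prod_cons, prod_cons, ← ih, pow_succ']
    rw [mul_assoc]

lemma sigma_liftable : M.IsLiftable (sigma cs) := by
  intro i i'
  apply Equiv.ext
  rintro ⟨t, e⟩
  rw [Equiv.Perm.coe_one, id_eq, prod_sigma_pow, prod_map_sigma]
  have hπ : π (alternatingWord i i' (2 * M i i')) = 1 := by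
    rw [cs.prod_alternatingWord_eq_mul_pow, if_pos ⟨M i i', by ring⟩, one_mul,
      show 2 * M i i' / 2 = M i i' from by omega, cs.simple_mul_simple_pow]
  have hsplit : (List.range (2 * M i i')).reverse.map (gfun cs i i')
      = ((List.range (M i i')).reverse.map (gfun cs i i'))
        ++ ((List.range (M i i')).reverse.map (gfun cs i i')) := by
    rw [show 2 * M i i' = M i i' + M i i' from by ring, List.range_add, reverse_append,
      map_append]
    congr 1
    rw [map_reverse, map_reverse, map_map]
    congr 1
    apply List.map_congr_left
    intro x _
    show gfun cs i i' (M i i' + x) = gfun cs i i' x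
    rw [add_comm]
    exact gfun_add_M cs i i' x
  have hcount : ((count t (ris (alternatingWord i i' (2 * M i i')))) : ZMod 2) = 0 := by
    rw [ris_alternatingWord, hsplit, count_append, Nat.cast_add, CharTwo.add_self_eq_zero]
  rw [hπ, hcount]
  simp


/-- Parity of the number of occurrences of `t` in the right inversion sequence only depends
on the product of the word. -/
lemma count_ris_parity {ω ω' : List B} (h : π ω = π ω') (t : W) :
    ((count t (ris ω) : ZMod 2)) = ((count t (ris ω') : ZMod 2)) := by
  have key : ∀ κ : List B, (κ.map (sigma cs)).prod = cs.lift ⟨sigma cs, sigma_liftable cs⟩ (π κ) := by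
    intro κ
    rw [wordProd, map_list_prod, map_map]
    congr 1
    apply List.map_congr_left
    intro x _
    show sigma cs x = cs.lift ⟨sigma cs, sigma_liftable cs⟩ (s x)
    rw [cs.lift_apply_simple]
  have := congrArg (fun f : Equiv.Perm (W × ZMod 2) => (f (t, 0)).2)
    ((key ω).trans (by rw [h, ← key ω']))
  simpa [prod_map_sigma] using this

/-- The exchange condition. -/
lemma exchange {ω : List B} {i : B}
    (hi : ℓ (π ω * s i) < ℓ (π ω)) :
    ∃ j, ∃ _ : j < ω.length, π ω * s i = π (ω.eraseIdx j) := by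
  obtain ⟨κ, hκred, hκ⟩ := cs.exists_reduced_word' (π ω * s i)
  have hlen : ℓ (π ω) = ℓ (π ω * s i) + 1 := by
    have h := cs.length_mul_simple (π ω * s i) i
    rw [mul_assoc, cs.simple_mul_simple_self, mul_one] at h
    rcases h with h | h <;> omega
  have hπκ : π (κ.concat i) = π ω := by
    rw [wordProd_concat, ← hκ, mul_assoc, cs.simple_mul_simple_self, mul_one]
  have hredκ : cs.IsReduced (κ.concat i) := by
    show ℓ (π (κ.concat i)) = (κ.concat i).length
    rw [hπκ, length_concat, ← hκred, ← hκ, hlen]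
  have hmem : s i ∈ ris (κ.concat i) := by
    rw [cs.rightInvSeq_concat]
    simp
  have hcount1 : count (s i) (ris (κ.concat i)) = 1 :=
    count_eq_one_of_mem (hredκ.nodup_rightInvSeq) hmem
  have hparity := count_ris_parity cs hπκ (s i)
  rw [hcount1] at hparity
  have hcpos : count (s i) (ris ω) ≠ 0 := by
    intro h0
    rw [h0] at hparity
    simp at hparity
  have hmem' : s i ∈ ris ω := count_pos_iff.mp (Nat.pos_of_ne_zero hcpos)
  obtain ⟨j, hj⟩ := List.mem_iff_get.mp hmem'
  have hjlt : (j : ℕ) < ω.length := by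
    exact j.isLt.trans_eq (cs.length_rightInvSeq ω)
  refine ⟨j, hjlt, ?_⟩
  have hgetD : (ris ω).getD j 1 = s i := by
    rw [List.getD_eq_getElem _ _ j.isLt]
    rw [← hj]
    simp [List.get_eq_getElem]
  calc π ω * s i = π ω * ((ris ω).getD j 1) := by rw [hgetD]
    _ = π (ω.eraseIdx j) := cs.wordProd_mul_getD_rightInvSeq ω j


open Classical in
/-- Deletion: a non-reduced word can be shortened by two letters. -/
lemma deletion {ω : List B} (h : ¬ cs.IsReduced ω) :
    ∃ ω' : List B, ω'.length + 2 = ω.length ∧ π ω' = π ω ∧ ∀ x ∈ ω', x ∈ ω := by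
  have hne : ω ≠ [] := by
    rintro rfl
    exact h (by simp [CoxeterSystem.IsReduced])
  have hlen1 : 1 ≤ ω.length := List.length_pos_iff.mpr hne
  have hP : ∃ j, ¬ cs.IsReduced (ω.take (j + 1)) := by
    refine ⟨ω.length - 1, ?_⟩
    rwa [show ω.length - 1 + 1 = ω.length from by omega, List.take_length]
  set j := Nat.find hP with hjdef
  have hj : ¬ cs.IsReduced (ω.take (j + 1)) := Nat.find_spec hP
  have hjmin : ∀ k, k < j → cs.IsReduced (ω.take (k + 1)) := by
    intro k hk
    exact not_not.mp (Nat.find_min hP hk)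
  have hjlt : j < ω.length := by
    have : j ≤ ω.length - 1 := Nat.find_le (by
      rwa [show ω.length - 1 + 1 = ω.length from by omega, List.take_length])
    by_contra hcon
    push_neg at hcon
    omega
  have htkred : cs.IsReduced (ω.take j) := by
    rcases Nat.eq_zero_or_pos j with h0 | hpos
    · rw [h0]; simp [CoxeterSystem.IsReduced]
    · have := hjmin (j - 1) (by omega)
      rwa [show j - 1 + 1 = j from by omega] at this
  have htake : ω.take (j + 1) = ω.take j ++ [ω[j]] := by
    rw [List.take_succ]
    congr 1
    rw [List.getElem?_eq_getElem hjlt]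
    rfl
  have hlentake : (ω.take j).length = j := by
    rw [List.length_take]; omega
  have hu : ℓ (π (ω.take j)) = j := by rw [htkred]; exact hlentake
  have hprod : π (ω.take (j + 1)) = π (ω.take j) * s ω[j] := by
    rw [htake, wordProd_append, wordProd_singleton]
  have hdesc : ℓ (π (ω.take j) * s ω[j]) < ℓ (π (ω.take j)) := by
    have hm := cs.length_mul_simple (π (ω.take j)) ω[j]
    rcases hm with hm | hm
    · exfalso
      apply hj
      show ℓ (π (ω.take (j+1))) = (ω.take (j+1)).length
      rw [hprod, hm, hu, List.length_take]
      omega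
    · omega
  obtain ⟨k, hk, heq⟩ := exchange cs hdesc
  rw [hlentake] at hk
  refine ⟨(ω.take j).eraseIdx k ++ ω.drop (j + 1), ?_, ?_, ?_⟩
  · rw [List.length_append, List.length_eraseIdx, if_pos (by omega), hlentake,
      List.length_drop]
    omega
  · rw [wordProd_append, ← heq, ← hprod, ← wordProd_append, List.take_append_drop]
  · intro x hx
    rcases List.mem_append.mp hx with hx | hx
    · exact List.mem_of_mem_take (List.mem_of_mem_eraseIdx hx)
    · exact List.mem_of_mem_drop hx

/-- Every element of a standard parabolic subgroup is represented by a reduced word with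
letters in the defining set. -/
lemma exists_reduced_word_subset (Y : Set B) (w : W)
    (hw : w ∈ Subgroup.closure (cs.simple '' Y)) :
    ∃ ω : List B, cs.IsReduced ω ∧ (∀ x ∈ ω, x ∈ Y) ∧ w = π ω := by
  have hword : ∃ ω : List B, (∀ x ∈ ω, x ∈ Y) ∧ w = π ω := by
    induction hw using Subgroup.closure_induction with
    | mem x hx =>
      obtain ⟨i, hi, rfl⟩ := hx
      exact ⟨[i], by simpa using hi, by simp⟩
    | one => exact ⟨[], by simp, by simp⟩
    | mul x y _ _ hx hy =>
      obtain ⟨ω₁, h1, rfl⟩ := hx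
      obtain ⟨ω₂, h2, rfl⟩ := hy
      exact ⟨ω₁ ++ ω₂, by
        intro z hz
        rcases List.mem_append.mp hz with h | h
        exacts [h1 z h, h2 z h], by rw [wordProd_append]⟩
    | inv x _ hx =>
      obtain ⟨ω, h1, rfl⟩ := hx
      exact ⟨ω.reverse, fun z hz => h1 z (List.mem_reverse.mp hz), by
        rw [cs.wordProd_reverse]⟩
  obtain ⟨ω, hY, rfl⟩ := hword
  clear hw
  suffices H : ∀ n (ω : List B), ω.length = n → (∀ x ∈ ω, x ∈ Y) →
      ∃ κ : List B, cs.IsReduced κ ∧ (∀ x ∈ κ, x ∈ Y) ∧ π ω = π κ by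
    obtain ⟨κ, h1, h2, h3⟩ := H ω.length ω rfl hY
    exact ⟨κ, h1, h2, h3⟩
  intro n
  induction n using Nat.strong_induction_on with
  | _ n ih =>
    intro ω hn hYω
    by_cases hred : cs.IsReduced ω
    · exact ⟨ω, hred, hYω, rfl⟩
    · obtain ⟨ω', hlen, hprod, hsub⟩ := deletion cs hred
      obtain ⟨κ, h1, h2, h3⟩ := ih ω'.length (by omega) ω' rfl
        (fun x hx => hYω x (hsub x hx))
      exact ⟨κ, h1, h2, by rw [← hprod]; exact h3⟩

lemma wordProd_mem_closure (Y : Set B) (ω : List B) (h : ∀ x ∈ ω, x ∈ Y) :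
    π ω ∈ Subgroup.closure (cs.simple '' Y) := by
  induction ω with
  | nil => simpa using one_mem _
  | cons i ω ih =>
    rw [wordProd_cons]
    exact mul_mem (Subgroup.subset_closure ⟨i, h i (by simp), rfl⟩)
      (ih fun x hx => h x (List.mem_cons_of_mem _ hx))


/-- If `d` is of minimal length in its coset `d * W_Y`, then lengths add:
`ℓ(d y) = ℓ d + ℓ y` for all `y ∈ W_Y`. -/
lemma length_mul_of_minimal (Y : Set B) (d : W)
    (hd : ∀ u ∈ Subgroup.closure (cs.simple '' Y), ℓ d ≤ ℓ (d * u)) :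
    ∀ y ∈ Subgroup.closure (cs.simple '' Y), ℓ (d * y) = ℓ d + ℓ y := by
  suffices H : ∀ n, ∀ y ∈ Subgroup.closure (cs.simple '' Y), ℓ y = n →
      ℓ (d * y) = ℓ d + ℓ y by
    intro y hy; exact H (ℓ y) y hy rfl
  intro n
  induction n using Nat.strong_induction_on with
  | _ n ih =>
    intro y hy hn
    rcases Nat.eq_zero_or_pos n with h0 | hpos
    · have : y = 1 := cs.length_eq_zero_iff.mp (by omega)
      subst this
      simp
    -- choose a reduced word for y with letters in Y
    obtain ⟨ω, hωred, hωY, hωeq⟩ := exists_reduced_word_subset cs Y y hy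
    have hωlen : ω.length = n := by rw [← hn, hωeq, hωred]
    have hωne : ω ≠ [] := by
      intro hcon; rw [hcon] at hωlen; simp at hωlen; omega
    obtain ⟨ω', i, rfl⟩ := List.eq_nil_or_concat ω |>.resolve_left hωne
    simp only [List.concat_eq_append] at hωred hωY hωeq hωlen hωne
    -- y = y' * s i
    have hω'red : cs.IsReduced ω' := by
      have := hωred.take ω'.length
      rwa [List.take_left] at this
    set y' := π ω' with hy'
    have hy'mem : y' ∈ Subgroup.closure (cs.simple '' Y) :=
      wordProd_mem_closure cs Y ω' (fun x hx => hωY x (by simp [hx]))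
    have hiY : i ∈ Y := hωY i (by simp)
    have hylen' : ℓ y' = n - 1 := by
      rw [hy', hω'red]
      have := congrArg List.length (rfl : ω' ++ [i] = ω' ++ [i])
      have hl : (ω' ++ [i]).length = n := hωlen
      simp at hl
      omega
    have hysplit : y = y' * s i := by
      rw [hωeq, wordProd_append, wordProd_singleton]
    have hIH : ℓ (d * y') = ℓ d + ℓ y' := ih (n - 1) (by omega) y' hy'mem hylen'
    -- two cases for ℓ (d * y' * s i)
    rcases cs.length_mul_simple (d * y') i with hcase | hcase
    · rw [hysplit, ← mul_assoc, hcase, hIH]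
      have h5 : ℓ (y' * s i) = n := by rw [← hysplit]; exact hn
      omega
    · -- descent case: derive a contradiction
      exfalso
      obtain ⟨κ, hκred, hκeq⟩ := cs.exists_reduced_word' d
      have hκlen : κ.length = ℓ d := by rw [← hκred, ← hκeq]
      have hθprod : π (κ ++ ω') = d * y' := by rw [wordProd_append, ← hκeq]
      have hθred : cs.IsReduced (κ ++ ω') := by
        show ℓ (π (κ ++ ω')) = (κ ++ ω').length
        rw [hθprod, List.length_append, hIH, hκlen, hω'red]
      have hdesc : ℓ (π (κ ++ ω') * s i) < ℓ (π (κ ++ ω')) := by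
        rw [hθprod]
        omega
      obtain ⟨k, hk, heq⟩ := exchange cs hdesc
      rw [hθprod] at heq
      rw [List.length_append] at hk
      rcases Nat.lt_or_ge k κ.length with hkκ | hkκ
      · -- letter deleted from the d part: contradicts minimality of d
        rw [List.eraseIdx_append_of_lt_length hkκ, wordProd_append] at heq
        set w := y' * s i * y'⁻¹ with hw
        have hwmem : w ∈ Subgroup.closure (cs.simple '' Y) :=
          mul_mem (mul_mem hy'mem (Subgroup.subset_closure ⟨i, hiY, rfl⟩))
            (inv_mem hy'mem)
        have hdw : d * w = π (κ.eraseIdx k) := by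
          rw [hw, ← mul_assoc, ← mul_assoc, heq, mul_assoc,
            show (π ω') = y' from rfl]
          simp
        have hlen1 : ℓ (d * w) ≤ (κ.eraseIdx k).length := by
          rw [hdw]; exact cs.length_wordProd_le _
        have hlen2 : (κ.eraseIdx k).length = κ.length - 1 := by
          rw [List.length_eraseIdx, if_pos hkκ]
        have := hd w hwmem
        omega
      · -- letter deleted from the y' part: contradicts reducedness of ω
        rw [List.eraseIdx_append_of_length_le hkκ, wordProd_append, ← hκeq] at heq
        have hcancel : y' * s i = π (ω'.eraseIdx (k - κ.length)) :=
          mul_left_cancel (by rw [← mul_assoc]; exact heq)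
        have : ℓ (y' * s i) ≤ (ω'.eraseIdx (k - κ.length)).length := by
          rw [hcancel]; exact cs.length_wordProd_le _
        have hlen3 : (ω'.eraseIdx (k - κ.length)).length = ω'.length - 1 := by
          rw [List.length_eraseIdx, if_pos (by omega)]
        have hyy : ℓ y = ℓ (y' * s i) := by rw [hysplit]
        have hωlen' : ω'.length = n - 1 := by rw [← hylen', hy', hω'red]
        omega

end CoxSalvetti

open CoxeterSystem

theorem salvetti_order_isPartialOrder {B W : Type*} [Group W]
    (M : CoxeterMatrix B) (cs : CoxeterSystem M W) :
    IsPartialOrder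
      {p : W × Set B // ((Subgroup.closure (cs.simple '' p.2) : Subgroup W) : Set W).Finite}
      (fun p q =>
        p.1.2 ⊆ q.1.2 ∧
        q.1.1⁻¹ * p.1.1 ∈ Subgroup.closure (cs.simple '' q.1.2) ∧
        ∀ u ∈ Subgroup.closure (cs.simple '' p.1.2),
          cs.length (q.1.1⁻¹ * p.1.1) ≤ cs.length (q.1.1⁻¹ * p.1.1 * u)) := by
  refine { refl := ?_, trans := ?_, antisymm := ?_ }
  case refine_1 =>
    intro p
    refine ⟨subset_rfl, by simp [one_mem], ?_⟩
    intro u _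
    simp
  case refine_2 =>
    rintro p q r ⟨hXY, heq, hemin⟩ ⟨hYZ, hdq, hdmin⟩
    refine ⟨hXY.trans hYZ, ?_, ?_⟩
    · have : r.1.1⁻¹ * p.1.1 = (r.1.1⁻¹ * q.1.1) * (q.1.1⁻¹ * p.1.1) := by group
      rw [this]
      exact mul_mem hdq (Subgroup.closure_mono (Set.image_mono hYZ) heq)
    · intro a ha
      set d := r.1.1⁻¹ * q.1.1 with hdd
      set e := q.1.1⁻¹ * p.1.1 with hee
      have hsplit : r.1.1⁻¹ * p.1.1 = d * e := by rw [hdd, hee]; group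
      have haY : a ∈ Subgroup.closure (cs.simple '' q.1.2) :=
        Subgroup.closure_mono (Set.image_mono hXY) ha
      have heaY : e * a ∈ Subgroup.closure (cs.simple '' q.1.2) := mul_mem heq haY
      have hKL := CoxSalvetti.length_mul_of_minimal cs q.1.2 d hdmin (e * a) heaY
      calc cs.length (r.1.1⁻¹ * p.1.1) = cs.length (d * e) := by rw [hsplit]
        _ ≤ cs.length d + cs.length e := cs.length_mul_le d e
        _ ≤ cs.length d + cs.length (e * a) := by
            have := hemin a ha
            omega
        _ = cs.length (d * (e * a)) := (hKL).symm
        _ = cs.length (r.1.1⁻¹ * p.1.1 * a) := by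
            rw [show r.1.1⁻¹ * p.1.1 * a = d * (e * a) from by rw [hsplit, mul_assoc]]
  case refine_3 =>
    rintro p q ⟨hXY, hqp, hmin⟩ ⟨hYX, hpq, _⟩
    have hset : p.1.2 = q.1.2 := subset_antisymm hXY hYX
    have h0 : cs.length (q.1.1⁻¹ * p.1.1) ≤
        cs.length (q.1.1⁻¹ * p.1.1 * (p.1.1⁻¹ * q.1.1)) := hmin _ hpq
    have h1 : q.1.1⁻¹ * p.1.1 * (p.1.1⁻¹ * q.1.1) = 1 := by group
    rw [h1, cs.length_one] at h0
    have h2 : q.1.1⁻¹ * p.1.1 = 1 := cs.length_eq_zero_iff.mp (by omega)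
    have h3 : p.1.1 = q.1.1 := by
      have := congrArg (fun x => q.1.1 * x) h2
      simpa [← mul_assoc] using this
    apply Subtype.ext
    exact Prod.ext h3 hset
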